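/- Let V be a real separable Hilbert space, (T(t))_{t≥0} a semigroup of bounded linear operators on V (T(0) = Id and T(t+s) = T(t)T(s)) which is stable, i.e. T(t)v → 0 in V as t → ∞ for every v ∈ V, and let (ν_t)_{t≥0} be a skew-convolution semigroup with respect to (T(t))_{t≥0}, i.e. ν_{t+s} = T_tν_s ∗ ν_t for all s,t ≥ 0. If λ and ν are Borel probability measures on V that are both stationary, i.e. λ = T_tλ ∗ ν_t and ν = T_tν ∗ ν_t for all t ≥ 0, then λ = ν. -/

import Mathlib

open MeasureTheory Filter Topology
open scoped MeasureTheory NNReal ENNReal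

section Aux
variable {α : Type*} [PseudoMetricSpace α]

lemma thickened_formula {δ : ℝ} (hδ : 0 < δ) {F : Set α} (hF : F.Nonempty) (x : α) :
    ((thickenedIndicator hδ F x : ℝ≥0) : ℝ) = max (1 - Metric.infDist x F / δ) 0 := by
  have h1 : Metric.infEDist x F ≠ ⊤ := Metric.infEdist_ne_top hF
  have h2 : thickenedIndicatorAux δ F x = ENNReal.ofReal (1 - Metric.infDist x F / δ) := by
    rw [ENNReal.ofReal_sub _ (div_nonneg Metric.infDist_nonneg hδ.le),
      ENNReal.ofReal_div_of_pos hδ, ENNReal.ofReal_one, Metric.infDist,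
      ENNReal.ofReal_toReal h1]
    rfl
  have h3 : ((thickenedIndicator hδ F x : ℝ≥0) : ℝ) = (thickenedIndicatorAux δ F x).toReal := rfl
  rw [h3, h2, ENNReal.toReal_ofReal']

lemma thickened_lipschitz {δ : ℝ} (hδ : 0 < δ) {F : Set α} (hF : F.Nonempty) :
    LipschitzWith (Real.toNNReal δ⁻¹) (fun x => ((thickenedIndicator hδ F x : ℝ≥0) : ℝ)) := by
  apply LipschitzWith.of_dist_le_mul
  intro x y
  simp only [thickened_formula hδ hF]
  rw [Real.dist_eq, Real.coe_toNNReal _ (by positivity)]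
  refine (abs_max_sub_max_le_abs _ _ _).trans ?_
  have h4 : (1 - Metric.infDist x F / δ) - (1 - Metric.infDist y F / δ)
      = (Metric.infDist y F - Metric.infDist x F) / δ := by ring
  rw [h4, abs_div, abs_of_pos hδ, inv_mul_eq_div]
  gcongr
  rw [abs_sub_le_iff]
  constructor
  · have h := Metric.infDist_le_infDist_add_dist (x := y) (y := x) (s := F)
    have h' := dist_comm x y; linarith
  · have h := Metric.infDist_le_infDist_add_dist (x := x) (y := y) (s := F)
    have h' := dist_comm x y; linarith

end Aux

/-- For a stable semigroup `(T(t))` and a skew-convolution semigroup `(ν_t)`, stationary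
measures are unique. -/
theorem stmt8
    {V : Type*}
    [NormedAddCommGroup V] [InnerProductSpace ℝ V] [CompleteSpace V] [SecondCountableTopology V]
    [MeasurableSpace V] [BorelSpace V]
    (T : ℝ → V →L[ℝ] V)
    (hT0 : T 0 = ContinuousLinearMap.id ℝ V)
    (hTadd : ∀ s t : ℝ, 0 ≤ s → 0 ≤ t → T (s + t) = (T s).comp (T t))
    (hstable : ∀ v : V, Tendsto (fun t : ℝ => T t v) atTop (𝓝 0))
    (ν : ℝ → Measure V) (hprob : ∀ t : ℝ, IsProbabilityMeasure (ν t))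
    (hskew : ∀ s t : ℝ, 0 ≤ s → 0 ≤ t → ν (t + s) = ((ν s).map (T t)) ∗ (ν t))
    (lam μ : Measure V) [IsProbabilityMeasure lam] [IsProbabilityMeasure μ]
    (hlam : ∀ t : ℝ, 0 ≤ t → lam = (lam.map (T t)) ∗ (ν t))
    (hμ : ∀ t : ℝ, 0 ≤ t → μ = (μ.map (T t)) ∗ (ν t)) :
    lam = μ := by
  have hTm : ∀ t : ℝ, Measurable (T t) := fun t => (T t).continuous.measurable
  -- Step 1: stationary measures integrate Lipschitz bounded functions equally.
  have main : ∀ (f : V → ℝ) (K : ℝ≥0) (C : ℝ), LipschitzWith K f → (∀ x, |f x| ≤ C) →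
      ∫ x, f x ∂lam = ∫ x, f x ∂μ := by
    intro f K C hf hC
    have hc : Continuous f := hf.continuous
    have hC0 : 0 ≤ C := le_trans (abs_nonneg _) (hC 0)
    -- integrability of translates
    have hintb : ∀ (ρ : Measure V), IsProbabilityMeasure ρ → ∀ a : V,
        Integrable (fun y => f (a + y)) ρ := by
      intro ρ hρ a
      haveI := hρ
      refine Integrable.mono' (integrable_const C)
        ((hc.comp (continuous_const.add continuous_id)).aestronglyMeasurable)
        (ae_of_all _ fun y => ?_)
      rw [Real.norm_eq_abs]; exact hC _
    -- pointwise estimate for inner integrals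
    have hptw : ∀ t : ℝ, ∀ a : V, haveI := hprob t
        |(∫ y, f (a + y) ∂(ν t)) - ∫ y, f y ∂(ν t)| ≤ min (2 * C) ((K : ℝ) * ‖a‖) := by
      intro t a
      haveI := hprob t
      have hint1 := hintb (ν t) (hprob t) a
      have hint2 : Integrable f (ν t) := by
        simpa using hintb (ν t) (hprob t) 0
      rw [← integral_sub hint1 hint2]
      calc |∫ y, (f (a + y) - f y) ∂(ν t)|
          ≤ ∫ y, |f (a + y) - f y| ∂(ν t) := by
            simpa [Real.norm_eq_abs] using norm_integral_le_integral_norm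
              (fun y => f (a + y) - f y) (μ := ν t)
        _ ≤ ∫ _y, min (2 * C) ((K : ℝ) * ‖a‖) ∂(ν t) := by
            refine integral_mono (hint1.sub hint2).abs (integrable_const _) fun y => ?_
            refine le_min ?_ ?_
            · have := hC (a + y); have := hC y
              have h := abs_sub (f (a + y)) (f y)
              calc |f (a + y) - f y| ≤ |f (a + y)| + |f y| := abs_sub _ _
                _ ≤ 2 * C := by linarith [hC (a + y), hC y]
            · have := hf.dist_le_mul (a + y) y
              simpa [Real.dist_eq, dist_eq_norm, add_sub_cancel_right] using this
        _ = min (2 * C) ((K : ℝ) * ‖a‖) := by simp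
    -- the key estimate for a stationary measure
    have est : ∀ (ρ : Measure V), IsProbabilityMeasure ρ →
        (∀ t : ℝ, 0 ≤ t → ρ = (ρ.map (T t)) ∗ (ν t)) →
        ∀ t : ℝ, 0 ≤ t →
        |(∫ x, f x ∂ρ) - ∫ y, f y ∂(ν t)| ≤ ∫ x, min (2 * C) ((K : ℝ) * ‖T t x‖) ∂ρ := by
      intro ρ hρp hρ t ht
      haveI := hρp
      haveI := hprob t
      haveI : IsProbabilityMeasure (ρ.map (T t)) :=
        Measure.isProbabilityMeasure_map (hTm t).aemeasurable
      have hmeas2 : StronglyMeasurable (fun p : V × V => f (p.1 + p.2)) :=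
        (hc.comp continuous_add).stronglyMeasurable
      have hint2 : Integrable (fun p : V × V => f (p.1 + p.2))
          ((ρ.map (T t)).prod (ν t)) := by
        refine Integrable.mono' (integrable_const C) hmeas2.aestronglyMeasurable
          (ae_of_all _ fun p => ?_)
        rw [Real.norm_eq_abs]; exact hC _
      have repr : ∫ x, f x ∂ρ = ∫ x, ∫ y, f (T t x + y) ∂(ν t) ∂ρ := by
        conv_lhs => rw [hρ t ht]
        rw [Measure.conv,
          integral_map (measurable_add.aemeasurable) hc.aestronglyMeasurable,
          integral_prod _ hint2,
          integral_map (hTm t).aemeasurable]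
        exact (hmeas2.integral_prod_right').aestronglyMeasurable
      have hgm : StronglyMeasurable (fun x : V => ∫ y, f (T t x + y) ∂(ν t)) := by
        have : StronglyMeasurable (fun p : V × V => f (T t p.1 + p.2)) :=
          (hc.comp (((T t).continuous.comp continuous_fst).add continuous_snd)).stronglyMeasurable
        exact this.integral_prod_right'
      have hgint : Integrable (fun x : V => ∫ y, f (T t x + y) ∂(ν t)) ρ := by
        refine Integrable.mono' (integrable_const C) hgm.aestronglyMeasurable
          (ae_of_all _ fun x => ?_)
        rw [Real.norm_eq_abs]
        calc |∫ y, f (T t x + y) ∂(ν t)| ≤ ∫ y, |f (T t x + y)| ∂(ν t) := by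
              simpa [Real.norm_eq_abs] using
                norm_integral_le_integral_norm (fun y => f (T t x + y)) (μ := ν t)
          _ ≤ ∫ _y, C ∂(ν t) :=
              integral_mono (hintb (ν t) (hprob t) (T t x)).abs (integrable_const _)
                fun y => hC _
          _ = C := by simp
      have hminint : Integrable (fun x : V => min (2 * C) ((K : ℝ) * ‖T t x‖)) ρ := by
        refine Integrable.mono' (integrable_const (2 * C))
          ((continuous_const.min (continuous_const.mul
            ((T t).continuous.norm))).aestronglyMeasurable) (ae_of_all _ fun x => ?_)
        rw [Real.norm_eq_abs, abs_of_nonneg (le_min (by positivity) (by positivity))]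
        exact min_le_left _ _
      rw [repr, show (∫ y, f y ∂(ν t)) = ∫ _x, (∫ y, f y ∂(ν t)) ∂ρ by simp,
        ← integral_sub hgint (integrable_const _)]
      calc |∫ x, ((∫ y, f (T t x + y) ∂(ν t)) - ∫ y, f y ∂(ν t)) ∂ρ|
          ≤ ∫ x, |(∫ y, f (T t x + y) ∂(ν t)) - ∫ y, f y ∂(ν t)| ∂ρ := by
            simpa [Real.norm_eq_abs] using norm_integral_le_integral_norm
              (fun x => (∫ y, f (T t x + y) ∂(ν t)) - ∫ y, f y ∂(ν t)) (μ := ρ)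
        _ ≤ ∫ x, min (2 * C) ((K : ℝ) * ‖T t x‖) ∂ρ := by
            refine integral_mono (hgint.sub (integrable_const _)).abs hminint fun x => ?_
            exact hptw t (T t x)
    -- the dominating integrals tend to zero
    have tend : ∀ (ρ : Measure V), IsProbabilityMeasure ρ →
        Tendsto (fun t : ℝ => ∫ x, min (2 * C) ((K : ℝ) * ‖T t x‖) ∂ρ) atTop (𝓝 0) := by
      intro ρ hρp
      haveI := hρp
      have h0 : (0 : ℝ) = ∫ _x, (0 : ℝ) ∂ρ := by simp
      rw [h0]
      apply tendsto_integral_filter_of_dominated_convergence (fun _ => 2 * C)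
      · exact Eventually.of_forall fun t => (continuous_const.min
          (continuous_const.mul ((T t).continuous.norm))).aestronglyMeasurable
      · refine Eventually.of_forall fun t => ae_of_all _ fun x => ?_
        rw [Real.norm_eq_abs, abs_of_nonneg (le_min (by positivity) (by positivity))]
        exact min_le_left _ _
      · exact integrable_const _
      · refine ae_of_all _ fun x => ?_
        have h1 : Tendsto (fun t : ℝ => (K : ℝ) * ‖T t x‖) atTop (𝓝 0) := by
          have h2 := ((hstable x).norm).const_mul (K : ℝ)
          simpa using h2
        have h3 := (tendsto_const_nhds (x := 2 * C) (f := atTop (α := ℝ))).min h1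
        simpa [min_eq_right (by positivity : (0 : ℝ) ≤ 2 * C)] using h3
    -- conclude
    have habs : |(∫ x, f x ∂lam) - ∫ x, f x ∂μ| ≤ 0 := by
      have hsum : Tendsto (fun t : ℝ => (∫ x, min (2 * C) ((K : ℝ) * ‖T t x‖) ∂lam)
          + ∫ x, min (2 * C) ((K : ℝ) * ‖T t x‖) ∂μ) atTop (𝓝 0) := by
        simpa using (tend lam ‹_›).add (tend μ ‹_›)
      refine ge_of_tendsto hsum ?_
      filter_upwards [eventually_ge_atTop (0 : ℝ)] with t ht
      have h1 := est lam ‹_› hlam t ht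
      have h2 := est μ ‹_› hμ t ht
      haveI := hprob t
      calc |(∫ x, f x ∂lam) - ∫ x, f x ∂μ|
          ≤ |(∫ x, f x ∂lam) - ∫ y, f y ∂(ν t)|
            + |(∫ x, f x ∂μ) - ∫ y, f y ∂(ν t)| := by
            rw [show (∫ x, f x ∂lam) - ∫ x, f x ∂μ
              = ((∫ x, f x ∂lam) - ∫ y, f y ∂(ν t))
                - ((∫ x, f x ∂μ) - ∫ y, f y ∂(ν t)) by ring]
            exact abs_sub _ _
        _ ≤ _ := add_le_add h1 h2
    have := abs_nonpos_iff.mp habs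
    linarith [this]
  -- Step 2: lam and μ agree on closed sets.
  have hclosed : ∀ F : Set V, IsClosed F → lam F = μ F := by
    intro F hFc
    rcases F.eq_empty_or_nonempty with rfl | hFne
    · simp
    have δpos : ∀ n : ℕ, 0 < (1 : ℝ) / (n + 1) := fun n => Nat.one_div_pos_of_nat
    have δlim : Tendsto (fun n : ℕ => (1 : ℝ) / (n + 1)) atTop (𝓝 0) :=
      tendsto_one_div_add_atTop_nhds_zero_nat
    have A := tendsto_lintegral_thickenedIndicator_of_isClosed (Ω := V) lam hFc δpos δlim
    have B := tendsto_lintegral_thickenedIndicator_of_isClosed (Ω := V) μ hFc δpos δlim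
    have heq : ∀ n : ℕ, (∫⁻ x, (thickenedIndicator (δpos n) F x : ℝ≥0∞) ∂lam)
        = ∫⁻ x, (thickenedIndicator (δpos n) F x : ℝ≥0∞) ∂μ := by
      intro n
      have hbd : ∀ x : V, |((thickenedIndicator (δpos n) F x : ℝ≥0) : ℝ)| ≤ 1 := fun x => by
        rw [abs_of_nonneg (NNReal.coe_nonneg _)]
        exact_mod_cast thickenedIndicator_le_one (δpos n) F x
      have hintl : ∀ (ρ : Measure V), IsProbabilityMeasure ρ →
          Integrable (fun x => ((thickenedIndicator (δpos n) F x : ℝ≥0) : ℝ)) ρ := by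
        intro ρ hρ
        haveI := hρ
        refine Integrable.mono' (integrable_const 1)
          ((thickened_lipschitz (δpos n) hFne).continuous.aestronglyMeasurable)
          (ae_of_all _ fun x => ?_)
        rw [Real.norm_eq_abs]; exact hbd x
      have hkey := main _ _ _ (thickened_lipschitz (δpos n) hFne) hbd
      rw [lintegral_coe_eq_integral _ (hintl lam ‹_›), lintegral_coe_eq_integral _ (hintl μ ‹_›),
        hkey]
    exact tendsto_nhds_unique A (by rw [show (fun n : ℕ => ∫⁻ x,
      (thickenedIndicator (δpos n) F x : ℝ≥0∞) ∂lam) = fun n => ∫⁻ x,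
      (thickenedIndicator (δpos n) F x : ℝ≥0∞) ∂μ from funext heq]; exact B)
  -- Step 3: conclude equality of measures via the π-system of open sets.
  refine MeasureTheory.ext_of_generate_finite {s : Set V | IsOpen s} ?_ ?_ ?_ ?_
  · exact BorelSpace.measurable_eq
  · exact fun s hs t ht _ => hs.inter ht
  · intro s hs
    have h2 : (1 : ℝ≥0∞) - lam s = 1 - μ s := by
      have h := hclosed sᶜ hs.isClosed_compl
      rwa [measure_compl hs.measurableSet (measure_ne_top _ _),
        measure_compl hs.measurableSet (measure_ne_top _ _), measure_univ, measure_univ] at h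
    exact (ENNReal.sub_right_inj ENNReal.one_ne_top prob_le_one prob_le_one).mp h2
  · simp
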